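/- arXiv:2410.19679 — 3 statements merged into one kernel-verified Lean document; each statement's English description precedes it below -/
import Mathlib

section
/- Let T be a bounded linear operator on a complex Hilbert space H and N a norm on B(H). If dw_N(T) = N(|T|)², then Re(T) = 0, i.e., T is anti-hermitian (T = -T*). -/
open ContinuousLinearMap Complex

variable {H : Type*} [NormedAddCommGroup H] [InnerProductSpace ℂ H] [CompleteSpace H]

/-- Real part of an operator: `Re(A) = (A + A*)/2`. -/
noncomputable def reOp (A : H →L[ℂ] H) : H →L[ℂ] H := (2 : ℂ)⁻¹ • (A + adjoint A)

/-- Imaginary part of an operator: `Im(A) = (A - A*)/(2i)`. -/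
noncomputable def imOp (A : H →L[ℂ] H) : H →L[ℂ] H := (2 * I)⁻¹ • (A - adjoint A)

/-- Modulus of an operator: `|A| = (A* A)^{1/2}`. -/
noncomputable def absOp (A : H →L[ℂ] H) : H →L[ℂ] H := CFC.sqrt (adjoint A * A)

/-- Generalized numerical radius. -/
noncomputable def wN (N : (H →L[ℂ] H) → ℝ) (T : H →L[ℂ] H) : ℝ :=
  ⨆ θ : ℝ, N (reOp (Complex.exp (θ * I) • T))

/-- Generalized Davis–Wielandt radius. -/
noncomputable def dwN (N : (H →L[ℂ] H) → ℝ) (T : H →L[ℂ] H) : ℝ :=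
  ⨆ θ : ℝ, Real.sqrt ((N (reOp (Complex.exp (θ * I) • T))) ^ 2
    + (N (reOp (Complex.exp (θ * I) • absOp T))) ^ 4)


set_option maxHeartbeats 800000
set_option synthInstance.maxHeartbeats 400000

lemma absOp_nonneg' (T : H →L[ℂ] H) : (0:H→L[ℂ]H) ≤ adjoint T * T := by
  rw [← star_eq_adjoint]; exact star_mul_self_nonneg T

lemma absOp_sa (T : H →L[ℂ] H) : adjoint (absOp T) = absOp T := by
  rw [← star_eq_adjoint]
  exact IsSelfAdjoint.of_nonneg (CFC.sqrt_nonneg (adjoint T * T))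

lemma absOp_eq_zero (T : H →L[ℂ] H) (h : absOp T = 0) : T = 0 := by
  have h0 := absOp_nonneg' T
  have := (CFC.sqrt_eq_zero_iff (adjoint T * T) h0).mp h
  rw [← star_eq_adjoint] at this
  exact (CStarRing.star_mul_self_eq_zero_iff T).mp this

theorem stmt_1 (N : (H →L[ℂ] H) → ℝ) (T : H →L[ℂ] H)
    (hN0 : ∀ A : H →L[ℂ] H, 0 ≤ N A)
    (hNeq : ∀ A : H →L[ℂ] H, N A = 0 → A = 0)
    (hNadd : ∀ A B : H →L[ℂ] H, N (A + B) ≤ N A + N B)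
    (hNsmul : ∀ (c : ℂ) (A : H →L[ℂ] H), N (c • A) = ‖c‖ * N A) :
    dwN N T = (N (absOp T)) ^ 2 → T = -adjoint T := by
  intro hdw
  set f : ℝ → ℝ := fun θ => Real.sqrt ((N (reOp (Complex.exp (θ * I) • T))) ^ 2
    + (N (reOp (Complex.exp (θ * I) • absOp T))) ^ 4) with hf
  have hre_abs : reOp (absOp T) = absOp T := by
    rw [reOp, absOp_sa, ← two_smul ℂ (absOp T), smul_smul]
    norm_num
  have hT0 : T = 0 ∨ reOp T = 0 := by
    by_cases hb : BddAbove (Set.range f)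
    · right
      have hle : f 0 ≤ dwN N T := le_ciSup hb 0
      have h0 : f 0 = Real.sqrt ((N (reOp T)) ^ 2 + (N (absOp T)) ^ 4) := by
        simp [hf, hre_abs]
      rw [h0, hdw] at hle
      have hnn : 0 ≤ (N (reOp T)) ^ 2 + (N (absOp T)) ^ 4 := by positivity
      have h2 : (N (reOp T)) ^ 2 + (N (absOp T)) ^ 4 ≤ ((N (absOp T)) ^ 2) ^ 2 := by
        have := Real.sqrt_le_sqrt (le_of_eq (Real.sq_sqrt hnn).symm)
        nlinarith [Real.sq_sqrt hnn, Real.sqrt_nonneg ((N (reOp T)) ^ 2 + (N (absOp T)) ^ 4),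
          sq_nonneg (N (absOp T))]
      have : (N (reOp T)) ^ 2 ≤ 0 := by nlinarith
      have : N (reOp T) = 0 := by nlinarith [hN0 (reOp T)]
      exact hNeq _ this
    · left
      have : dwN N T = 0 := Real.iSup_of_not_bddAbove hb
      rw [this] at hdw
      have : N (absOp T) = 0 := by nlinarith [hN0 (absOp T)]
      exact absOp_eq_zero T (hNeq _ this)
  rcases hT0 with h | h
  · simp [h]
  · have : T + adjoint T = 0 := by
      have := congrArg (fun X => (2:ℂ) • X) h
      simpa [reOp, smul_smul] using this
    linear_combination (norm := abel) this
end

section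
/- Let T be a bounded linear operator on a complex Hilbert space H and N a submultiplicative (algebra) norm on B(H). Then dw_N(T) ≥ (1/2) sqrt( N(T² + 2|T|⁴) ). -/
open ContinuousLinearMap Complex

variable {H : Type*} [NormedAddCommGroup H] [InnerProductSpace ℂ H] [CompleteSpace H]

lemma adj_smul' (c : ℂ) (A : H →L[ℂ] H) : adjoint (c • A) = (starRingEnd ℂ c) • adjoint A := by
  rw [← star_eq_adjoint, ← star_eq_adjoint, star_smul]; rfl

lemma reOp_exp_smul' (θ : ℝ) (S : H →L[ℂ] H) :
    reOp (Complex.exp (θ * I) • S)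
      = (Real.cos θ : ℂ) • reOp S - (Real.sin θ : ℂ) • imOp S := by
  have hI : ((2:ℂ) * I)⁻¹ = -(I/2) := by rw [mul_inv, Complex.inv_I]; ring
  unfold reOp imOp
  rw [adj_smul', hI]
  simp only [Complex.exp_mul_I, ← Complex.ofReal_cos, ← Complex.ofReal_sin, map_add, map_mul,
    Complex.conj_I, Complex.conj_ofReal]
  match_scalars <;> ring

lemma reOp_I_smul' (S : H →L[ℂ] H) : reOp (I • S) = (-1 : ℂ) • imOp S := by
  have h := reOp_exp_smul' (Real.pi / 2) S
  rw [show Complex.exp (↑(Real.pi / 2) * I) = I by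
    push_cast
    rw [Complex.exp_mul_I,
      show (↑Real.pi / 2 : ℂ) = ((Real.pi / 2 : ℝ) : ℂ) by push_cast; ring,
      ← Complex.ofReal_cos, ← Complex.ofReal_sin]
    simp] at h
  simp at h
  simpa using h

set_option synthInstance.maxHeartbeats 800000 in
lemma adjoint_absOp' (A : H →L[ℂ] H) : adjoint (absOp A) = absOp A := by
  have h : (0 : H →L[ℂ] H) ≤ absOp A := CFC.sqrt_nonneg _
  rw [← ContinuousLinearMap.star_eq_adjoint, (IsSelfAdjoint.of_nonneg h).star_eq]

lemma reOp_absOp' (A : H →L[ℂ] H) : reOp (absOp A) = absOp A := by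
  unfold reOp
  rw [adjoint_absOp', ← two_smul ℂ, smul_smul]
  norm_num

lemma imOp_absOp' (A : H →L[ℂ] H) : imOp (absOp A) = 0 := by
  unfold imOp; rw [adjoint_absOp']; simp

lemma reOp_add_I_smul_imOp' (T : H →L[ℂ] H) : reOp T + I • imOp T = T := by
  unfold reOp imOp
  rw [smul_smul, show I * ((2:ℂ)*I)⁻¹ = 2⁻¹ by rw [mul_inv, Complex.inv_I]; field_simp; simp]
  module

theorem stmt_4 (N : (H →L[ℂ] H) → ℝ) (T : H →L[ℂ] H)
    (hN0 : ∀ A : H →L[ℂ] H, 0 ≤ N A)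
    (hNeq : ∀ A : H →L[ℂ] H, N A = 0 → A = 0)
    (hNadd : ∀ A B : H →L[ℂ] H, N (A + B) ≤ N A + N B)
    (hNsmul : ∀ (c : ℂ) (A : H →L[ℂ] H), N (c • A) = ‖c‖ * N A)
    (hNmul : ∀ A B : H →L[ℂ] H, N (A * B) ≤ N A * N B) :
    dwN N T ≥ (1 / 2) * Real.sqrt (N (T ^ 2 + 2 • absOp T ^ 4)) := by
  set A := reOp T with hA
  set B := imOp T with hB
  set C := absOp T with hC
  set a := N A
  set b := N B
  set c := N C
  have ha : 0 ≤ a := hN0 A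
  have hb : 0 ≤ b := hN0 B
  have hc : 0 ≤ c := hN0 C
  have hN0' : N 0 = 0 := by
    have := hNsmul 0 0
    simpa using this
  -- the function whose supremum is dwN
  set g : ℝ → ℝ := fun θ => Real.sqrt ((N (reOp (Complex.exp (θ * I) • T))) ^ 2
    + (N (reOp (Complex.exp (θ * I) • C))) ^ 4) with hg
  have hdw : dwN N T = ⨆ θ : ℝ, g θ := rfl
  -- pointwise bounds on the two ingredients
  have hbound1 : ∀ θ : ℝ, N (reOp (Complex.exp (θ * I) • T)) ≤ a + b := by
    intro θ
    rw [reOp_exp_smul', sub_eq_add_neg, ← neg_smul]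
    calc N ((Real.cos θ : ℂ) • A + (-(Real.sin θ : ℂ)) • B)
        ≤ N ((Real.cos θ : ℂ) • A) + N ((-(Real.sin θ : ℂ)) • B) := hNadd _ _
      _ = ‖(Real.cos θ : ℂ)‖ * a + ‖(-(Real.sin θ : ℂ))‖ * b := by
          rw [hNsmul, hNsmul]
      _ ≤ 1 * a + 1 * b := by
          gcongr
          · rw [Complex.norm_real, Real.norm_eq_abs]; exact Real.abs_cos_le_one θ
          · rw [norm_neg, Complex.norm_real, Real.norm_eq_abs]; exact Real.abs_sin_le_one θ
      _ = a + b := by ring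
  have hbound2 : ∀ θ : ℝ, N (reOp (Complex.exp (θ * I) • C)) ≤ c := by
    intro θ
    rw [reOp_exp_smul', reOp_absOp', imOp_absOp', smul_zero, sub_zero, hNsmul]
    calc ‖(Real.cos θ : ℂ)‖ * c ≤ 1 * c := by
          gcongr
          · rw [Complex.norm_real, Real.norm_eq_abs]; exact Real.abs_cos_le_one θ
      _ = c := one_mul c
  -- boundedness of the range of g
  have hbdd : BddAbove (Set.range g) := by
    refine ⟨Real.sqrt ((a + b) ^ 2 + c ^ 4), ?_⟩
    rintro x ⟨θ, rfl⟩
    apply Real.sqrt_le_sqrt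
    gcongr
    · exact hN0 _
    · exact hbound1 θ
    · exact hN0 _
    · exact hbound2 θ
  -- lower bound from θ = 0
  have h0 : Real.sqrt (a ^ 2 + c ^ 4) ≤ dwN N T := by
    rw [hdw]
    have h := le_ciSup hbdd 0
    simp only [hg] at h
    rw [show Complex.exp ((0:ℝ) * I) = 1 by norm_num, one_smul, one_smul,
      reOp_absOp'] at h
    exact h
  -- lower bound from θ = π/2
  have hpi : b ≤ dwN N T := by
    rw [hdw]
    have h := le_ciSup hbdd (Real.pi / 2)
    have hexp : Complex.exp (↑(Real.pi / 2) * I) = I := by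
      push_cast
      rw [Complex.exp_mul_I,
        show (↑Real.pi / 2 : ℂ) = ((Real.pi / 2 : ℝ) : ℂ) by push_cast; ring,
        ← Complex.ofReal_cos, ← Complex.ofReal_sin]
      simp
    simp only [hg] at h
    rw [hexp, reOp_I_smul', reOp_I_smul', imOp_absOp', smul_zero, hN0',
      hNsmul, norm_neg, norm_one, one_mul] at h
    calc b = Real.sqrt (b ^ 2 + 0 ^ 4) := by
          rw [show (0:ℝ) ^ 4 = 0 by norm_num, add_zero, Real.sqrt_sq hb]
      _ ≤ _ := h
  have hdwnn : 0 ≤ dwN N T := le_trans hb hpi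
  have hsq1 : a ^ 2 + c ^ 4 ≤ dwN N T ^ 2 := by
    have := Real.sq_sqrt (by positivity : (0:ℝ) ≤ a ^ 2 + c ^ 4)
    calc a ^ 2 + c ^ 4 = Real.sqrt (a ^ 2 + c ^ 4) ^ 2 := this.symm
      _ ≤ dwN N T ^ 2 := by gcongr
  have hsq2 : b ^ 2 ≤ dwN N T ^ 2 := pow_le_pow_left₀ hb hpi 2
  -- decomposition of T and T^2
  have hT : T = A + I • B := (reOp_add_I_smul_imOp' T).symm
  have hT2 : T ^ 2 = A * A + ((-1 : ℂ) • (B * B) + I • (A * B + B * A)) := by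
    rw [sq]; nth_rewrite 1 [hT]; nth_rewrite 1 [hT]
    simp only [add_mul, mul_add, smul_mul_assoc, mul_smul_comm, smul_smul, Complex.I_mul_I,
      neg_smul, one_smul, smul_add]
    module
  have hNT2 : N (T ^ 2) ≤ (a + b) ^ 2 := by
    rw [hT2]
    calc N (A * A + ((-1 : ℂ) • (B * B) + I • (A * B + B * A)))
        ≤ N (A * A) + (N ((-1 : ℂ) • (B * B)) + N (I • (A * B + B * A))) :=
          le_trans (hNadd _ _) (by gcongr; exact hNadd _ _)
      _ = N (A * A) + (N (B * B) + N (A * B + B * A)) := by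
          rw [hNsmul, hNsmul]; simp
      _ ≤ a * a + (b * b + (N (A * B) + N (B * A))) := by
          gcongr
          · exact hNmul _ _
          · exact hNmul _ _
          · exact hNadd _ _
      _ ≤ a * a + (b * b + (a * b + b * a)) := by
          gcongr
          · exact hNmul _ _
          · exact hNmul _ _
      _ = (a + b) ^ 2 := by ring
  have hNC4 : N (C ^ 4) ≤ c ^ 4 := by
    have h2 : N (C ^ 2) ≤ c * c := by rw [sq]; exact hNmul _ _
    calc N (C ^ 4) = N (C ^ 2 * C ^ 2) := by rw [← pow_add]
      _ ≤ N (C ^ 2) * N (C ^ 2) := hNmul _ _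
      _ ≤ (c * c) * (c * c) := mul_le_mul h2 h2 (hN0 _) (by positivity)
      _ = c ^ 4 := by ring
  have hmain : N (T ^ 2 + 2 • C ^ 4) ≤ 4 * dwN N T ^ 2 := by
    calc N (T ^ 2 + 2 • C ^ 4) ≤ N (T ^ 2) + N (2 • C ^ 4) := hNadd _ _
      _ ≤ N (T ^ 2) + 2 * N (C ^ 4) := by
          rw [two_smul]
          gcongr
          calc N (C ^ 4 + C ^ 4) ≤ N (C ^ 4) + N (C ^ 4) := hNadd _ _
            _ = 2 * N (C ^ 4) := by ring
      _ ≤ (a + b) ^ 2 + 2 * c ^ 4 := by gcongr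
      _ ≤ 4 * dwN N T ^ 2 := by nlinarith [sq_nonneg (a - b)]
  -- finish
  have hfin : Real.sqrt (N (T ^ 2 + 2 • C ^ 4)) ≤ 2 * dwN N T := by
    calc Real.sqrt (N (T ^ 2 + 2 • C ^ 4)) ≤ Real.sqrt (4 * dwN N T ^ 2) :=
          Real.sqrt_le_sqrt hmain
      _ = Real.sqrt ((2 * dwN N T) ^ 2) := by ring_nf
      _ = 2 * dwN N T := Real.sqrt_sq (by positivity)
  linarith
end

section
/- Let T be a bounded linear operator on a complex Hilbert space H and N a norm on B(H). Then dw_N(T) ≥ (1/2) sqrt( (3/4) N(T)² + 2 N(|T|)⁴ + (d₁ + d₂) + 2|m₁ − m₂| ), where m₁ = max{N(Re T)² + N(|T|)⁴, w_N(T)²}, m₂ = max{N(Im T)², N(|T|)⁴}, d₁ = |N(Re T)² + N(|T|)⁴ − w_N(T)²|, d₂ = |N(Im T)² − N(|T|)⁴|. -/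
open ContinuousLinearMap Complex

variable {H : Type*} [NormedAddCommGroup H] [InnerProductSpace ℂ H] [CompleteSpace H]

lemma my_h2I : ((2:ℂ) * I)⁻¹ = -(2⁻¹ * I) := by
  rw [mul_inv, Complex.inv_I]; ring

set_option synthInstance.maxHeartbeats 1000000 in
set_option maxHeartbeats 1000000 in
lemma my_absOp_sa (A : H →L[ℂ] H) : IsSelfAdjoint (absOp A) :=
  IsSelfAdjoint.of_nonneg (CFC.sqrt_nonneg _)

lemma my_reOp_exp_smul (θ : ℝ) (A : H →L[ℂ] H) :
    reOp (Complex.exp (θ * I) • A)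
      = ((Real.cos θ : ℂ)) • reOp A - ((Real.sin θ : ℂ)) • imOp A := by
  simp only [reOp, imOp, ← star_eq_adjoint, star_smul, Complex.exp_mul_I,
    ← Complex.ofReal_cos, ← Complex.ofReal_sin, star_add, star_mul',
    Complex.star_def, Complex.conj_ofReal, Complex.conj_I, my_h2I]
  match_scalars <;> · simp [Complex.ext_iff]; constructor <;> ring

lemma my_decomp (A : H →L[ℂ] H) : A = reOp A + I • imOp A := by
  simp only [reOp, imOp, my_h2I]
  match_scalars <;> · simp [Complex.ext_iff]; try norm_num

lemma my_reOp_sa (A : H →L[ℂ] H) (hA : IsSelfAdjoint A) : reOp A = A := by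
  rw [reOp, ← star_eq_adjoint, hA.star_eq, ← two_smul ℂ, smul_smul]
  norm_num

lemma my_imOp_sa (A : H →L[ℂ] H) (hA : IsSelfAdjoint A) : imOp A = 0 := by
  rw [imOp, ← star_eq_adjoint, hA.star_eq, sub_self, smul_zero]

lemma my_two_max (x y : ℝ) : 2 * max x y = x + y + |x - y| := by
  rcases le_total x y with h | h
  · rw [max_eq_right h, abs_of_nonpos (by linarith)]; ring
  · rw [max_eq_left h, _root_.abs_of_nonneg (by linarith)]; ring

theorem stmt_11 (N : (H →L[ℂ] H) → ℝ) (T : H →L[ℂ] H)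
    (hN0 : ∀ A : H →L[ℂ] H, 0 ≤ N A)
    (hNeq : ∀ A : H →L[ℂ] H, N A = 0 → A = 0)
    (hNadd : ∀ A B : H →L[ℂ] H, N (A + B) ≤ N A + N B)
    (hNsmul : ∀ (c : ℂ) (A : H →L[ℂ] H), N (c • A) = ‖c‖ * N A)
    (m₁ m₂ d₁ d₂ : ℝ)
    (hm₁ : m₁ = max ((N (reOp T)) ^ 2 + (N (absOp T)) ^ 4) ((wN N T) ^ 2))
    (hm₂ : m₂ = max ((N (imOp T)) ^ 2) ((N (absOp T)) ^ 4))
    (hd₁ : d₁ = |(N (reOp T)) ^ 2 + (N (absOp T)) ^ 4 - (wN N T) ^ 2|)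
    (hd₂ : d₂ = |(N (imOp T)) ^ 2 - (N (absOp T)) ^ 4|) :
    dwN N T ≥ (1 / 2) * Real.sqrt ((3 / 4) * (N T) ^ 2 + 2 * (N (absOp T)) ^ 4
      + (d₁ + d₂) + 2 * |m₁ - m₂|) := by
  have hsa : IsSelfAdjoint (absOp T) := my_absOp_sa T
  set a := N (reOp T) with ha_def
  set b := N (imOp T) with hb_def
  set c := N (absOp T) with hc_def
  have hN0' : N (0 : H →L[ℂ] H) = 0 := by simpa using hNsmul 0 0
  -- bound for the rotated real part
  have hbound : ∀ (A : H →L[ℂ] H) (θ : ℝ),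
      N (reOp (Complex.exp (θ * I) • A)) ≤ N (reOp A) + N (imOp A) := by
    intro A θ
    rw [my_reOp_exp_smul]
    calc N ((Real.cos θ : ℂ) • reOp A - (Real.sin θ : ℂ) • imOp A)
        ≤ N ((Real.cos θ : ℂ) • reOp A) + N ((-(Real.sin θ : ℂ)) • imOp A) := by
          rw [sub_eq_add_neg, ← neg_smul]; exact hNadd _ _
      _ = ‖((Real.cos θ : ℝ) : ℂ)‖ * N (reOp A) + ‖(-(Real.sin θ : ℂ))‖ * N (imOp A) := by
          rw [hNsmul, hNsmul]
      _ ≤ 1 * N (reOp A) + 1 * N (imOp A) := by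
          gcongr
          · exact hN0 _
          · rw [Complex.norm_real, Real.norm_eq_abs]; exact Real.abs_cos_le_one θ
          · exact hN0 _
          · rw [norm_neg, Complex.norm_real, Real.norm_eq_abs]; exact Real.abs_sin_le_one θ
      _ = N (reOp A) + N (imOp A) := by ring
  have habs_bound : ∀ θ : ℝ, N (reOp (Complex.exp (θ * I) • absOp T)) ≤ c := by
    intro θ
    have := hbound (absOp T) θ
    rwa [my_reOp_sa _ hsa, my_imOp_sa _ hsa, hN0', add_zero] at this
  -- boundedness of the two families
  have hbddg : BddAbove (Set.range fun θ : ℝ => N (reOp (Complex.exp (θ * I) • T))) := by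
    refine ⟨a + b, ?_⟩
    rintro _ ⟨θ, rfl⟩
    exact hbound T θ
  have hbddf : BddAbove (Set.range fun θ : ℝ =>
      Real.sqrt ((N (reOp (Complex.exp (θ * I) • T))) ^ 2
        + (N (reOp (Complex.exp (θ * I) • absOp T))) ^ 4)) := by
    refine ⟨Real.sqrt ((a + b) ^ 2 + c ^ 4), ?_⟩
    rintro _ ⟨θ, rfl⟩
    apply Real.sqrt_le_sqrt
    have h1 : (N (reOp (Complex.exp (θ * I) • T))) ^ 2 ≤ (a + b) ^ 2 :=
      pow_le_pow_left₀ (hN0 _) (hbound T θ) 2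
    have h2 : (N (reOp (Complex.exp (θ * I) • absOp T))) ^ 4 ≤ c ^ 4 :=
      pow_le_pow_left₀ (hN0 _) (habs_bound θ) 4
    linarith
  -- evaluations at special angles
  have hexp0 : Complex.exp ((0 : ℝ) * I) = 1 := by simp
  have h_re0 : reOp (Complex.exp ((0 : ℝ) * I) • T) = reOp T := by rw [hexp0, one_smul]
  have h_abs0 : reOp (Complex.exp ((0 : ℝ) * I) • absOp T) = absOp T := by
    rw [hexp0, one_smul, my_reOp_sa _ hsa]
  have h_reπ : reOp (Complex.exp ((-(Real.pi / 2) : ℝ) * I) • T) = imOp T := by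
    rw [my_reOp_exp_smul]
    simp
  have h_absπ : reOp (Complex.exp ((-(Real.pi / 2) : ℝ) * I) • absOp T) = 0 := by
    rw [my_reOp_exp_smul, my_imOp_sa _ hsa]
    simp
  -- lower bounds for dwN
  have hD1 : Real.sqrt (a ^ 2 + c ^ 4) ≤ dwN N T := by
    rw [dwN]
    refine le_trans (le_of_eq ?_) (le_ciSup hbddf (0 : ℝ))
    rw [h_re0, h_abs0]
  have hD2 : b ≤ dwN N T := by
    rw [dwN]
    refine le_trans (le_of_eq ?_) (le_ciSup hbddf (-(Real.pi / 2) : ℝ))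
    rw [h_reπ, h_absπ, hN0',
      show N (imOp T) ^ 2 + (0:ℝ) ^ 4 = N (imOp T) ^ 2 by norm_num,
      Real.sqrt_sq (hN0 _)]
  have hw1 : a ≤ wN N T := by
    rw [wN]
    refine le_trans (le_of_eq ?_) (le_ciSup hbddg (0 : ℝ))
    rw [h_re0]
  have hw2 : b ≤ wN N T := by
    rw [wN]
    refine le_trans (le_of_eq ?_) (le_ciSup hbddg (-(Real.pi / 2) : ℝ))
    rw [h_reπ]
  have hwD : wN N T ≤ dwN N T := by
    rw [wN, dwN]
    refine ciSup_mono hbddf fun θ => ?_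
    exact le_trans (le_of_eq (Real.sqrt_sq (hN0 _)).symm)
      (Real.sqrt_le_sqrt (le_add_of_nonneg_right (by positivity)))
  set w := wN N T with hw_def
  set D := dwN N T with hD_def
  have hD0 : 0 ≤ D := le_trans (hN0 _) hD2
  have hw0 : 0 ≤ w := le_trans (hN0 _) hw1
  have hsqD1 : a ^ 2 + c ^ 4 ≤ D ^ 2 := by
    have h := pow_le_pow_left₀ (Real.sqrt_nonneg _) hD1 2
    rwa [Real.sq_sqrt (by positivity)] at h
  have hDc : c ^ 2 ≤ D := by
    refine le_trans ?_ hD1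
    rw [show Real.sqrt (a ^ 2 + c ^ 4) = Real.sqrt (a ^ 2 + (c ^ 2) ^ 2) by ring_nf]
    refine le_trans (le_of_eq (Real.sqrt_sq (sq_nonneg c)).symm) ?_
    exact Real.sqrt_le_sqrt (le_add_of_nonneg_left (by positivity))
  have hNT : N T ≤ a + b := by
    calc N T = N (reOp T + I • imOp T) := by rw [← my_decomp]
      _ ≤ N (reOp T) + N (I • imOp T) := hNadd _ _
      _ = a + ‖I‖ * b := by rw [hNsmul]
      _ = a + b := by rw [Complex.norm_I]; ring
  -- key quadratic bounds
  have hm1D : m₁ ≤ D ^ 2 := by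
    rw [hm₁]
    exact max_le hsqD1 (pow_le_pow_left₀ hw0 hwD 2)
  have hm2D : m₂ ≤ D ^ 2 := by
    rw [hm₂]
    refine max_le (pow_le_pow_left₀ (hN0 _) hD2 2) ?_
    calc c ^ 4 = (c ^ 2) ^ 2 := by ring
      _ ≤ D ^ 2 := pow_le_pow_left₀ (sq_nonneg c) hDc 2
  have e1 : 2 * m₁ = (a ^ 2 + c ^ 4) + w ^ 2 + d₁ := by
    rw [hm₁, hd₁, my_two_max]
  have e2 : 2 * m₂ = b ^ 2 + c ^ 4 + d₂ := by
    rw [hm₂, hd₂, my_two_max]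
  have e3 : m₁ + m₂ + |m₁ - m₂| ≤ 2 * D ^ 2 := by
    rw [← my_two_max]
    have : max m₁ m₂ ≤ D ^ 2 := max_le hm1D hm2D
    linarith
  have h1 : (N T) ^ 2 ≤ (a + b) ^ 2 := pow_le_pow_left₀ (hN0 T) hNT 2
  have h3 : (N T) ^ 2 ≤ 4 * w ^ 2 := by nlinarith [hN0 T]
  have hS : (3 / 4) * (N T) ^ 2 + 2 * c ^ 4 + (d₁ + d₂) + 2 * |m₁ - m₂| ≤ (2 * D) ^ 2 := by
    nlinarith [sq_nonneg (a - b)]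
  calc (1 / 2) * Real.sqrt ((3 / 4) * (N T) ^ 2 + 2 * c ^ 4 + (d₁ + d₂) + 2 * |m₁ - m₂|)
      ≤ (1 / 2) * Real.sqrt ((2 * D) ^ 2) :=
        mul_le_mul_of_nonneg_left (Real.sqrt_le_sqrt hS) (by norm_num)
    _ = D := by rw [Real.sqrt_sq (by linarith)]; ring
end
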